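/- arXiv:2507.14530 — 3 statements merged into one kernel-verified Lean document; each statement's English description precedes it below -/
import Mathlib

section
/- Let f: Γ → Γ' be a morphism of graphs and let (Γ' ×_φ F, p, Γ') be an F-graph bundle induced by an F-voltage function φ on Γ'. Then, with respect to fixed vertex orders and lexicographical orders on products, the adjacency matrix of the total space Γ ×_{f^*φ} F of the pullback bundle satisfies A_{Γ ×_{f^*φ} F} = Σ_{ψ ∈ Aut(F)} [A_Γ ∘ B_{f,ψ}] ⊗ perm(ψ) + I_{|V_Γ|} ⊗ A_F, where B_{f,ψ} = M_f^T (I + A_{Γ'}(ψ)) M_f if ψ = id_F and B_{f,ψ} = M_f^T A_{Γ'}(ψ) M_f otherwise (here I is the identity matrix of size |V_{Γ'}|). -/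
open Classical Matrix Kronecker

universe u

noncomputable section

/-- A morphism of graphs: adjacent vertices are mapped to adjacent or equal vertices. -/
def IsGraphMorphism {V W : Type*} (G : SimpleGraph V) (H : SimpleGraph W) (f : V → W) : Prop :=
  ∀ ⦃a b : V⦄, G.Adj a b → H.Adj (f a) (f b) ∨ f a = f b

/-- The graph `X̃` obtained from `X` by deleting the edges lying inside fibers of `p`. -/
def delFiberEdges {VX VB : Type*} (X : SimpleGraph VX) (p : VX → VB) : SimpleGraph VX where
  Adj a b := X.Adj a b ∧ p a ≠ p b
  symm := by
    constructor
    intro a b h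
    exact ⟨h.1.symm, Ne.symm h.2⟩
  loopless := by
    constructor
    intro a h
    exact X.loopless.irrefl a h.1

/-- `(X, p, B)` is an `F`-graph bundle. -/
structure IsGraphBundle {VF VX VB : Type*} (F : SimpleGraph VF) (X : SimpleGraph VX)
    (p : VX → VB) (B : SimpleGraph VB) : Prop where
  morphism : IsGraphMorphism X B p
  surj : Function.Surjective p
  fiber_iso : ∀ v : VB, Nonempty ((X.induce (p ⁻¹' {v})) ≃g F)
  fiber_card : ∀ v : VB, Nat.card (p ⁻¹' {v}) = Nat.card VF
  covering : ∀ x : VX,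
    Set.BijOn p ((delFiberEdges X p).neighborSet x) (B.neighborSet (p x))
  transport : ∀ ⦃v w : VB⦄, B.Adj v w →
    ∃ ψ : (X.induce (p ⁻¹' {v})) ≃g (X.induce (p ⁻¹' {w})),
      ∀ x : (p ⁻¹' {v}), X.Adj x.1 (ψ x).1

/-- Vertices of the pullback graph. -/
abbrev PullbackVert {VB VX VC : Type*} (f : VB → VC) (p : VX → VC) :=
  {a : VB × VX // f a.1 = p a.2}

/-- The total space of the pullback of the bundle `(X, p, C)` along `f : B → C`. -/
def pullbackGraph {VB VX VC : Type*} (B : SimpleGraph VB) (X : SimpleGraph VX)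
    (f : VB → VC) (p : VX → VC) (C : SimpleGraph VC) :
    SimpleGraph (PullbackVert f p) where
  Adj a b :=
    (a.1.1 = b.1.1 ∧ X.Adj a.1.2 b.1.2) ∨
    (B.Adj a.1.1 b.1.1 ∧ f a.1.1 = f b.1.1 ∧ a.1.2 = b.1.2) ∨
    (B.Adj a.1.1 b.1.1 ∧ C.Adj (f a.1.1) (f b.1.1) ∧ X.Adj a.1.2 b.1.2)
  symm := by
    constructor
    rintro a b (⟨h1, h2⟩ | ⟨h1, h2, h3⟩ | ⟨h1, h2, h3⟩)
    · exact Or.inl ⟨h1.symm, h2.symm⟩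
    · exact Or.inr (Or.inl ⟨h1.symm, h2.symm, h3.symm⟩)
    · exact Or.inr (Or.inr ⟨h1.symm, h2.symm, h3.symm⟩)
  loopless := by
    constructor
    rintro a (⟨_, h⟩ | ⟨h, _⟩ | ⟨h, _⟩)
    · exact X.loopless.irrefl _ h
    · exact B.loopless.irrefl _ h
    · exact B.loopless.irrefl _ h

/-- The projection of the pullback bundle. -/
def pullbackProj {VB VX VC : Type*} (f : VB → VC) (p : VX → VC) :
    PullbackVert f p → VB := fun a => a.1.1

/-- Two graph bundles over the same base are equivalent. -/
def BundlesEquiv {VX VY VB : Type*} (X : SimpleGraph VX) (p : VX → VB)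
    (Y : SimpleGraph VY) (q : VY → VB) : Prop :=
  ∃ Φ : X ≃g Y, ∀ x, q (Φ x) = p x

/-- A graph bundle is trivial if it is equivalent to `(B □ F, π, B)` with `π (v, f) = v`. -/
def IsTrivialBundle {VF VX VB : Type*} (F : SimpleGraph VF) (X : SimpleGraph VX)
    (p : VX → VB) (B : SimpleGraph VB) : Prop :=
  ∃ Φ : X ≃g (B.boxProd F), ∀ x, (Φ x).1 = p x

/-- An `F`-voltage function on `B`. -/
structure VoltageFunction {VB VF : Type*} (B : SimpleGraph VB) (F : SimpleGraph VF) where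
  volt : VB → VB → (F ≃g F)
  volt_symm : ∀ v w, volt w v = (volt v w).symm

/-- The graph `B ×_φ F` associated with a voltage function. -/
def voltageGraph {VB VF : Type*} (B : SimpleGraph VB) (F : SimpleGraph VF)
    (φ : VoltageFunction B F) : SimpleGraph (VB × VF) where
  Adj a b := (B.Adj a.1 b.1 ∧ b.2 = φ.volt a.1 b.1 a.2) ∨ (a.1 = b.1 ∧ F.Adj a.2 b.2)
  symm := by
    constructor
    rintro a b (⟨h1, h2⟩ | ⟨h1, h2⟩)
    · refine Or.inl ⟨h1.symm, ?_⟩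
      rw [φ.volt_symm, h2, RelIso.symm_apply_apply]
    · exact Or.inr ⟨h1.symm, h2.symm⟩
  loopless := by
    constructor
    rintro a (⟨h, _⟩ | ⟨_, h⟩)
    · exact B.loopless.irrefl _ h
    · exact F.loopless.irrefl _ h

/-- The pullback of a voltage function along a graph morphism. -/
def pullbackVoltage {VB VC VF : Type*} (B : SimpleGraph VB) (C : SimpleGraph VC)
    (F : SimpleGraph VF) (f : VB → VC) (φ : VoltageFunction C F) : VoltageFunction B F where
  volt v w := if f v = f w then RelIso.refl _ else φ.volt (f v) (f w)
  volt_symm v w := by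
    try dsimp only
    by_cases h : f v = f w
    · rw [if_pos h, if_pos h.symm]
      rfl
    · rw [if_neg h, if_neg (fun hh : f w = f v => h hh.symm), φ.volt_symm]
/-- Adjacency matrix (over `ℝ`). -/
def adjMat {V : Type*} (G : SimpleGraph V) : Matrix V V ℝ :=
  Matrix.of fun a b => if G.Adj a b then 1 else 0

/-- Permutation matrix of an automorphism of `F`. -/
def permMat {VF : Type*} {F : SimpleGraph VF} (ψ : F ≃g F) : Matrix VF VF ℝ :=
  Matrix.of fun a b => if b = ψ a then 1 else 0

/-- The matrix `M_f` of a map of vertex sets. -/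
def morMat {VB VC : Type*} (f : VB → VC) : Matrix VC VB ℝ :=
  Matrix.of fun c b => if f b = c then 1 else 0

/-- The matrix `A_B(ψ)` of a voltage function. -/
def voltMat {VB VF : Type*} {B : SimpleGraph VB} {F : SimpleGraph VF}
    (φ : VoltageFunction B F) (ψ : F ≃g F) : Matrix VB VB ℝ :=
  Matrix.of fun v w => if B.Adj v w ∧ φ.volt v w = ψ then 1 else 0

instance instFiniteGraphIso {VF : Type*} [Finite VF] (F : SimpleGraph VF) :
    Finite (F ≃g F) :=
  Finite.of_injective (fun ψ => (ψ.toEquiv : VF ≃ VF)) (fun a b h => by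
    cases a; cases b; simpa using h)

noncomputable instance instFintypeGraphIso {VF : Type*} [Finite VF] (F : SimpleGraph VF) :
    Fintype (F ≃g F) :=
  Fintype.ofFinite _

/-- The image graph `f(Γ)` of a graph morphism. -/
def imageGraph {VB VC : Type*} (B : SimpleGraph VB) (f : VB → VC) :
    SimpleGraph (Set.range f) where
  Adj a b := a.1 ≠ b.1 ∧ ∃ v w, B.Adj v w ∧ f v = a.1 ∧ f w = b.1
  symm := by
    constructor
    rintro a b ⟨hne, v, w, h, hv, hw⟩
    exact ⟨hne.symm, w, v, h.symm, hw, hv⟩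
  loopless := by
    constructor
    rintro a ⟨hne, -⟩
    exact hne rfl

/-- The Cayley graph of a group with respect to a set of generators. -/
def cayleyGraph {G : Type*} [Group G] (S : Set G) : SimpleGraph G :=
  SimpleGraph.fromRel (fun x y => ∃ s ∈ S, y = x * s)

/-- The subdirect product of two groups with amalgamated factor group `B`. -/
def subdirSubgroup {A₁ A₂ B : Type*} [Group A₁] [Group A₂] [Group B]
    (φ₁ : A₁ →* B) (φ₂ : A₂ →* B) : Subgroup (A₁ × A₂) where
  carrier := {a : A₁ × A₂ | φ₁ a.1 = φ₂ a.2}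
  one_mem' := by simp
  mul_mem' := by
    intro a b ha hb
    simp only [Set.mem_setOf_eq, Prod.fst_mul, Prod.snd_mul, _root_.map_mul] at *
    rw [ha, hb]
  inv_mem' := by
    intro a ha
    simp only [Set.mem_setOf_eq, Prod.fst_inv, Prod.snd_inv, _root_.map_inv] at *
    rw [ha]
lemma sandwich {VB VC : Type*} [Fintype VC] [DecidableEq VC] (f : VB → VC)
    (X : Matrix VC VC ℝ) (v w : VB) :
    ((morMat f)ᵀ * X * (morMat f)) v w = X (f v) (f w) := by
  simp [Matrix.mul_apply, Matrix.transpose_apply, morMat, ite_mul, mul_ite,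
    Finset.sum_ite_eq, Finset.sum_ite_eq']

/-- adjacency matrix of the total space of the pullback of a voltage bundle. -/
theorem adjMat_pullback_voltage
    {VB VC VF : Type*} [Fintype VB] [Fintype VC] [Fintype VF]
    [DecidableEq VB] [DecidableEq VC] [DecidableEq VF]
    (B : SimpleGraph VB) (C : SimpleGraph VC) (F : SimpleGraph VF)
    (φ : VoltageFunction C F) (f : VB → VC) (hf : IsGraphMorphism B C f) :
    adjMat (voltageGraph B F (pullbackVoltage B C F f φ)) =
      (∑ ψ : F ≃g F,
        (Matrix.hadamard (adjMat B)
          (if ψ = RelIso.refl F.Adj then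
              (morMat f)ᵀ * ((1 : Matrix VC VC ℝ) + voltMat φ ψ) * morMat f
            else (morMat f)ᵀ * voltMat φ ψ * morMat f)) ⊗ₖ permMat ψ)
      + (1 : Matrix VB VB ℝ) ⊗ₖ adjMat F := by
  ext ⟨v, f₁⟩ ⟨w, f₂⟩
  rw [Matrix.add_apply, Matrix.sum_apply]
  have key : ∀ ψ : F ≃g F,
      ((Matrix.hadamard (adjMat B)
          (if ψ = RelIso.refl F.Adj then
              (morMat f)ᵀ * ((1 : Matrix VC VC ℝ) + voltMat φ ψ) * morMat f
            else (morMat f)ᵀ * voltMat φ ψ * morMat f)) ⊗ₖ permMat ψ) (v,f₁) (w,f₂)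
      = if (pullbackVoltage B C F f φ).volt v w = ψ then
          (if B.Adj v w ∧ f₂ = ((pullbackVoltage B C F f φ).volt v w) f₁ then 1 else 0)
        else 0 := by
    intro ψ
    rw [Matrix.kroneckerMap_apply, Matrix.hadamard_apply, apply_ite (fun M : Matrix VB VB ℝ => M v w), sandwich, sandwich]
    by_cases hB : B.Adj v w
    · by_cases hfv : f v = f w
      · have hpv : (pullbackVoltage B C F f φ).volt v w = RelIso.refl F.Adj := if_pos hfv
        have hC : ¬ C.Adj (f v) (f w) := by rw [hfv]; exact C.loopless.irrefl _
        have hV : voltMat φ ψ (f v) (f w) = 0 := by simp [voltMat, hC]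
        rw [hV, hpv]
        by_cases hψ : ψ = RelIso.refl F.Adj
        · subst hψ
          simp [adjMat, permMat, hB, Matrix.one_apply, hfv, voltMat]
        · rw [if_neg hψ, if_neg (fun h => hψ h.symm)]
          simp
      · have hC : C.Adj (f v) (f w) := (hf hB).resolve_right hfv
        have hpv : (pullbackVoltage B C F f φ).volt v w = φ.volt (f v) (f w) := if_neg hfv
        have hone : (1 : Matrix VC VC ℝ) (f v) (f w) = 0 := by
          rw [Matrix.one_apply]; exact if_neg hfv
        rw [Matrix.add_apply, hone, zero_add, ite_self, hpv]
        by_cases hvolt : φ.volt (f v) (f w) = ψ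
        · rw [if_pos hvolt, hvolt]
          simp [adjMat, voltMat, permMat, hB, hC, hvolt]
        · rw [if_neg hvolt]
          have : voltMat φ ψ (f v) (f w) = 0 := by simp [voltMat, hvolt]
          rw [this]
          simp
    · have : adjMat B v w = 0 := by simp [adjMat, hB]
      rw [this, zero_mul, zero_mul]
      simp [hB]
  rw [Finset.sum_congr rfl (fun ψ _ => key ψ)]
  rw [Finset.sum_ite_eq Finset.univ ((pullbackVoltage B C F f φ).volt v w)
    (fun _ => if B.Adj v w ∧ f₂ = ((pullbackVoltage B C F f φ).volt v w) f₁ then 1 else 0)]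
  rw [if_pos (Finset.mem_univ _), Matrix.kroneckerMap_apply, Matrix.one_apply]
  simp only [adjMat, Matrix.of_apply]
  by_cases h1 : B.Adj v w ∧ f₂ = ((pullbackVoltage B C F f φ).volt v w) f₁
  · have hvw : v ≠ w := h1.1.ne
    rw [if_pos h1, if_pos (show (voltageGraph B F (pullbackVoltage B C F f φ)).Adj (v, f₁) (w, f₂) from Or.inl h1), if_neg hvw]
    ring
  · rw [if_neg h1]
    by_cases h2 : v = w
    · subst h2
      rw [if_pos rfl, one_mul]
      by_cases h3 : F.Adj f₁ f₂
      · rw [if_pos h3, if_pos (show (voltageGraph B F (pullbackVoltage B C F f φ)).Adj (v, f₁) (v, f₂) from Or.inr ⟨rfl, h3⟩)]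
        ring
      · rw [if_neg h3, if_neg ?_]
        · ring
        · rintro (h | ⟨-, h⟩)
          · exact h1 h
          · exact h3 h
    · rw [if_neg h2]
      rw [if_neg ?_]
      · ring
      · rintro (h | ⟨h, -⟩)
        · exact h1 h
        · exact h2 h
end
end

section
/- Let (X₁,p₁,Γ) and (X₂,p₂,Γ) be an F₁-graph bundle and an F₂-graph bundle over the same base Γ, and let f: Γ' → Γ be a morphism of graphs. Then f^*(X₁ ⊞ X₂, (p₁,p₂), Γ) is equivalent to f^*(X₁,p₁,Γ) ⊞ f^*(X₂,p₂,Γ); an equivalence is given on vertices by (v,x,y) ↦ (v,x,v,y). -/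
open Classical Matrix Kronecker

universe u

noncomputable section

set_option maxHeartbeats 2000000 in
theorem pullback_subdir_aux (a A e E b X c Y : Prop)
    (ha : a → e) (hA : A → ¬a) (hE : E → ¬e) (hb : b → e) (hc : c → e) :
    (a ∧ b) ∧ (a ∧ Y ∨ A ∧ e ∧ c ∨ A ∧ E ∧ Y) ∨
      (a ∧ X ∨ A ∧ e ∧ b ∨ A ∧ E ∧ X) ∧ a ∧ a ∧ c ∨
        (a ∧ X ∨ A ∧ e ∧ b ∨ A ∧ E ∧ X) ∧ A ∧ (a ∧ Y ∨ A ∧ e ∧ c ∨ A ∧ E ∧ Y) ↔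
    a ∧ (b ∧ Y ∨ X ∧ e ∧ c ∨ X ∧ E ∧ Y) ∨
      A ∧ e ∧ b ∧ c ∨
        A ∧ E ∧ (b ∧ Y ∨ X ∧ e ∧ c ∨ X ∧ E ∧ Y) := by
  tauto

/-- pullback commutes with the subdirect product of graph bundles;
an equivalence is given on vertices by `(v, x, y) ↦ ((v, x), (v, y))`. -/
theorem pullback_subdir
    {VB' VB VF₁ VF₂ VX₁ VX₂ : Type*}
    [Fintype VB'] [Fintype VB] [Fintype VF₁] [Fintype VF₂] [Fintype VX₁] [Fintype VX₂]
    (B' : SimpleGraph VB') (B : SimpleGraph VB)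
    (F₁ : SimpleGraph VF₁) (F₂ : SimpleGraph VF₂)
    (X₁ : SimpleGraph VX₁) (X₂ : SimpleGraph VX₂)
    (p₁ : VX₁ → VB) (p₂ : VX₂ → VB) (f : VB' → VB)
    (h₁ : IsGraphBundle F₁ X₁ p₁ B) (h₂ : IsGraphBundle F₂ X₂ p₂ B)
    (hf : IsGraphMorphism B' B f) :
    ∃ Ψ : (pullbackGraph B' (pullbackGraph X₁ X₂ p₁ p₂ B) f (fun a => p₁ a.1.1) B) ≃g
          (pullbackGraph (pullbackGraph B' X₁ f p₁ B) (pullbackGraph B' X₂ f p₂ B)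
            (pullbackProj f p₁) (pullbackProj f p₂) B'),
      (∀ a, (Ψ a).1.1.1.1 = a.1.1) ∧
      (∀ a, ((Ψ a).1.1).1 = (a.1.1, a.1.2.1.1) ∧ ((Ψ a).1.2).1 = (a.1.1, a.1.2.1.2)) := by
  refine ⟨⟨⟨fun a => ⟨(⟨(a.1.1, a.1.2.1.1), a.2⟩, ⟨(a.1.1, a.1.2.1.2),
      by rw [a.2]; exact a.1.2.2⟩), rfl⟩,
    fun b => ⟨(b.1.1.1.1, ⟨(b.1.1.1.2, b.1.2.1.2),
      by have h : b.1.1.1.1 = b.1.2.1.1 := b.2; rw [← b.1.1.2, h, b.1.2.2]⟩), b.1.1.2⟩, ?_, ?_⟩, ?_⟩, fun a => rfl,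
    fun a => ⟨rfl, rfl⟩⟩
  · rintro ⟨⟨v, ⟨⟨x, y⟩, hxy⟩⟩, hv⟩
    rfl
  · rintro ⟨⟨⟨⟨v, x⟩, hvx⟩, ⟨⟨w, y⟩, hwy⟩⟩, hb⟩
    simp only [pullbackProj] at hb
    subst hb
    rfl
  · rintro ⟨⟨v, ⟨⟨x, y⟩, hxy⟩⟩, hv⟩ ⟨⟨w, ⟨⟨x', y'⟩, hxy'⟩⟩, hw⟩
    have hv' : f v = p₁ x := hv
    have hw' : f w = p₁ x' := hw
    have hxy0 : p₁ x = p₂ y := hxy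
    have hxy0' : p₁ x' = p₂ y' := hxy'
    dsimp only [Equiv.coe_fn_mk]
    simp only [Equiv.coe_fn_mk, pullbackGraph, pullbackProj, Subtype.mk.injEq,
      Prod.mk.injEq]
    rw [← hv', ← hw']
    have ha : v = w → f v = f w := fun h => by rw [h]
    have hA : B'.Adj v w → ¬ v = w := fun h he => B'.loopless.irrefl v (he ▸ h)
    have hE : B.Adj (f v) (f w) → ¬ f v = f w := fun h he => B.loopless.irrefl _ (he ▸ h)
    have hb : x = x' → f v = f w := fun h => by rw [hv', hw', h]
    have hc : y = y' → f v = f w := fun h => by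
      rw [hv', hw', hxy0, hxy0', h]
    exact pullback_subdir_aux _ _ _ _ _ _ _ _ ha hA hE hb hc
end
end

section
/- Let φ₁: A₁ → B and φ₂: A₂ → B be surjective homomorphisms of finite groups, and let S₁ = {s₁,…,sₙ} be a symmetric generating set of B with 1_B ∉ S₁. For i = 1,2 let S̃_{1,i} = {s̃_{1,i},…,s̃_{n,i}} be an S₁-transversal section of φᵢ, let S_{0,i} be an admissible symmetric generating set of ker(φᵢ), and set S_{φᵢ} = S_{0,i} ∪ S̃_{1,i}. Let φ: A₁ ×_B A₂ → B be the surjection induced by (φ₁,φ₂), and define S̃₁ = {(s̃_{j,1},s̃_{j,2}) : j = 1,…,n}, S₀ = (S_{0,1} × {1_{A₂}}) ∪ ({1_{A₁}} × S_{0,2}), and S_φ = S₀ ∪ S̃₁. Then Cay(A₁ ×_B A₂, S_φ) = Cay(A₁,S_{φ₁}) ⊞ Cay(A₂,S_{φ₂}); that is, the Cayley graph of the subdirect product of groups equals the total space of the subdirect product of the graph bundles (Cay(A₁,S_{φ₁}), φ₁, Cay(B,S₁)) and (Cay(A₂,S_{φ₂}), φ₂, Cay(B,S₁)), with the same vertex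 set and the same edge set. -/
open Classical Matrix Kronecker

universe u

noncomputable section

lemma cayley_adj {G : Type*} [Group G] {S : Set G} (hsym : ∀ s ∈ S, s⁻¹ ∈ S)
    {x y : G} : (cayleyGraph S).Adj x y ↔ x ≠ y ∧ ∃ s ∈ S, y = x * s := by
  simp only [cayleyGraph, SimpleGraph.fromRel_adj]
  constructor
  · rintro ⟨hne, h | h⟩
    · exact ⟨hne, h⟩
    · obtain ⟨s, hs, h⟩ := h
      exact ⟨hne, s⁻¹, hsym s hs, by rw [h]; group⟩
  · rintro ⟨hne, hs⟩
    exact ⟨hne, Or.inl hs⟩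

/-- the Cayley graph of the subdirect product of two finite groups equals
the total space of the subdirect product of the associated Cayley graph bundles. -/
theorem cayley_subdirect
    {A₁ A₂ B : Type*} [Group A₁] [Group A₂] [Group B] [Fintype A₁] [Fintype A₂] [Fintype B]
    (φ₁ : A₁ →* B) (φ₂ : A₂ →* B)
    (h₁surj : Function.Surjective φ₁) (h₂surj : Function.Surjective φ₂)
    (S₁ : Set B) (hS₁sym : ∀ s ∈ S₁, s⁻¹ ∈ S₁) (hS₁gen : Subgroup.closure S₁ = ⊤)
    (hS₁one : (1 : B) ∉ S₁)
    (t₁ : B → A₁) (t₂ : B → A₂)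
    (ht₁ : ∀ s ∈ S₁, φ₁ (t₁ s) = s) (ht₂ : ∀ s ∈ S₁, φ₂ (t₂ s) = s)
    (ht₁inv : ∀ s ∈ S₁, t₁ s⁻¹ = (t₁ s)⁻¹) (ht₂inv : ∀ s ∈ S₁, t₂ s⁻¹ = (t₂ s)⁻¹)
    (S01 : Set A₁) (S02 : Set A₂)
    (hS01sym : ∀ s ∈ S01, s⁻¹ ∈ S01) (hS02sym : ∀ s ∈ S02, s⁻¹ ∈ S02)
    (hS01sub : S01 ⊆ (φ₁.ker : Set A₁)) (hS02sub : S02 ⊆ (φ₂.ker : Set A₂))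
    (hS01gen : Subgroup.closure S01 = φ₁.ker) (hS02gen : Subgroup.closure S02 = φ₂.ker)
    (hS01one : (1 : A₁) ∉ S01) (hS02one : (1 : A₂) ∉ S02)
    (hadm₁ : ∀ (a : A₁), ∀ s ∈ S01, a * s * a⁻¹ ∈ S01)
    (hadm₂ : ∀ (a : A₂), ∀ s ∈ S02, a * s * a⁻¹ ∈ S02) :
    cayleyGraph
      ({x : ↥(subdirSubgroup φ₁ φ₂) |
          ((x : A₁ × A₂).1 ∈ S01 ∧ (x : A₁ × A₂).2 = 1) ∨
          ((x : A₁ × A₂).1 = 1 ∧ (x : A₁ × A₂).2 ∈ S02) ∨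
          (∃ s ∈ S₁, (x : A₁ × A₂) = (t₁ s, t₂ s))}) =
      pullbackGraph (cayleyGraph (S01 ∪ t₁ '' S₁)) (cayleyGraph (S02 ∪ t₂ '' S₁))
        (⇑φ₁) (⇑φ₂) (cayleyGraph S₁) := by
  have hsym1 : ∀ s ∈ S01 ∪ t₁ '' S₁, s⁻¹ ∈ S01 ∪ t₁ '' S₁ := by
    rintro s (hs | ⟨σ, hσ, rfl⟩)
    · exact Or.inl (hS01sym s hs)
    · exact Or.inr ⟨σ⁻¹, hS₁sym σ hσ, ht₁inv σ hσ⟩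
  have hsym2 : ∀ s ∈ S02 ∪ t₂ '' S₁, s⁻¹ ∈ S02 ∪ t₂ '' S₁ := by
    rintro s (hs | ⟨σ, hσ, rfl⟩)
    · exact Or.inl (hS02sym s hs)
    · exact Or.inr ⟨σ⁻¹, hS₁sym σ hσ, ht₂inv σ hσ⟩
  have hsymD : ∀ s ∈ ({x : ↥(subdirSubgroup φ₁ φ₂) |
          ((x : A₁ × A₂).1 ∈ S01 ∧ (x : A₁ × A₂).2 = 1) ∨
          ((x : A₁ × A₂).1 = 1 ∧ (x : A₁ × A₂).2 ∈ S02) ∨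
          (∃ s ∈ S₁, (x : A₁ × A₂) = (t₁ s, t₂ s))}),
      s⁻¹ ∈ ({x : ↥(subdirSubgroup φ₁ φ₂) |
          ((x : A₁ × A₂).1 ∈ S01 ∧ (x : A₁ × A₂).2 = 1) ∨
          ((x : A₁ × A₂).1 = 1 ∧ (x : A₁ × A₂).2 ∈ S02) ∨
          (∃ s ∈ S₁, (x : A₁ × A₂) = (t₁ s, t₂ s))}) := by
    rintro s (⟨h1, h2⟩ | ⟨h1, h2⟩ | ⟨σ, hσ, h⟩)
    · exact Or.inl ⟨hS01sym _ h1, by simp [h2]⟩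
    · exact Or.inr (Or.inl ⟨by simp [h1], hS02sym _ h2⟩)
    · refine Or.inr (Or.inr ⟨σ⁻¹, hS₁sym σ hσ, ?_⟩)
      have : ((s : A₁ × A₂))⁻¹ = (t₁ σ, t₂ σ)⁻¹ := by rw [h]
      simpa [Prod.ext_iff, ht₁inv σ hσ, ht₂inv σ hσ] using this
  ext x y
  have hx : φ₁ (x : A₁ × A₂).1 = φ₂ (x : A₁ × A₂).2 := x.2
  have hy : φ₁ (y : A₁ × A₂).1 = φ₂ (y : A₁ × A₂).2 := y.2
  rw [cayley_adj hsymD]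
  show _ ↔ ((x : A₁ × A₂).1 = (y : A₁ × A₂).1 ∧
        (cayleyGraph (S02 ∪ t₂ '' S₁)).Adj (x : A₁ × A₂).2 (y : A₁ × A₂).2) ∨
      ((cayleyGraph (S01 ∪ t₁ '' S₁)).Adj (x : A₁ × A₂).1 (y : A₁ × A₂).1 ∧
        φ₁ (x : A₁ × A₂).1 = φ₁ (y : A₁ × A₂).1 ∧ (x : A₁ × A₂).2 = (y : A₁ × A₂).2) ∨
      ((cayleyGraph (S01 ∪ t₁ '' S₁)).Adj (x : A₁ × A₂).1 (y : A₁ × A₂).1 ∧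
        (cayleyGraph S₁).Adj (φ₁ (x : A₁ × A₂).1) (φ₁ (y : A₁ × A₂).1) ∧
        (cayleyGraph (S02 ∪ t₂ '' S₁)).Adj (x : A₁ × A₂).2 (y : A₁ × A₂).2)
  rw [cayley_adj hsym1, cayley_adj hsym2, cayley_adj hS₁sym]
  constructor
  · rintro ⟨hne, s, hs, rfl⟩
    have hco : ((x * s : ↥(subdirSubgroup φ₁ φ₂)) : A₁ × A₂) =
        (x : A₁ × A₂) * (s : A₁ × A₂) := rfl
    rcases hs with ⟨h1, h2⟩ | ⟨h1, h2⟩ | ⟨σ, hσ, h⟩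
    · refine Or.inr (Or.inl ⟨⟨?_, (s : A₁ × A₂).1, Or.inl h1, by simp [hco]⟩, ?_, ?_⟩)
      · intro hcontra
        rw [hco, Prod.fst_mul] at hcontra
        exact hS01one (by
          have : (s : A₁ × A₂).1 = 1 := by
            have := hcontra.symm
            rw [mul_eq_left] at this
            exact this
          rwa [← this])
      · rw [hco, Prod.fst_mul, _root_.map_mul, MonoidHom.mem_ker.mp (hS01sub h1), mul_one]
      · rw [hco, Prod.snd_mul, h2, mul_one]
    · refine Or.inl ⟨by rw [hco, Prod.fst_mul, h1, mul_one], ?_, (s : A₁ × A₂).2,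
        Or.inl h2, by simp [hco]⟩
      intro hcontra
      rw [hco, Prod.snd_mul] at hcontra
      exact hS02one (by
        have : (s : A₁ × A₂).2 = 1 := by
          have := hcontra.symm
          rw [mul_eq_left] at this
          exact this
        rwa [← this])
    · have hs1 : (s : A₁ × A₂).1 = t₁ σ := by rw [h]
      have hs2 : (s : A₁ × A₂).2 = t₂ σ := by rw [h]
      have hφne : φ₁ (x : A₁ × A₂).1 ≠ φ₁ (((x * s : ↥(subdirSubgroup φ₁ φ₂)) : A₁ × A₂)).1 := by
        rw [hco, Prod.fst_mul, _root_.map_mul, hs1, ht₁ σ hσ]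
        intro hcontra
        exact hS₁one (by
          have : σ = 1 := by
            have := hcontra.symm
            rw [mul_eq_left] at this
            exact this
          rwa [← this])
      have hne1 : (x : A₁ × A₂).1 ≠ (((x * s : ↥(subdirSubgroup φ₁ φ₂)) : A₁ × A₂)).1 :=
        fun hh => hφne (by rw [hh])
      have hφne2 : φ₂ (x : A₁ × A₂).2 ≠ φ₂ (((x * s : ↥(subdirSubgroup φ₁ φ₂)) : A₁ × A₂)).2 := by
        rw [← hx, ← (x * s).2]
        exact hφne
      have hne2 : (x : A₁ × A₂).2 ≠ (((x * s : ↥(subdirSubgroup φ₁ φ₂)) : A₁ × A₂)).2 :=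
        fun hh => hφne2 (by rw [hh])
      refine Or.inr (Or.inr ⟨⟨hne1, t₁ σ, Or.inr ⟨σ, hσ, rfl⟩, by simp [hco, hs1]⟩,
        ⟨hφne, σ, hσ, by rw [hco, Prod.fst_mul, _root_.map_mul, hs1, ht₁ σ hσ]⟩,
        ⟨hne2, t₂ σ, Or.inr ⟨σ, hσ, rfl⟩, by simp [hco, hs2]⟩⟩)
  · rintro (⟨heq1, hne2, u, hu, hmul2⟩ | ⟨⟨hne1, u, hu, hmul1⟩, hker, heq2⟩ |
      ⟨⟨hne1, u, hu, hmul1⟩, ⟨hφne, -⟩, hne2, w, hw, hmul2⟩)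
    · -- vertical edge: generator (1, u) with u ∈ S02
      have hu' : u ∈ S02 := by
        rcases hu with hu | ⟨σ, hσ, rfl⟩
        · exact hu
        · exfalso
          apply hS₁one
          have : φ₂ (y : A₁ × A₂).2 = φ₂ (x : A₁ × A₂).2 * σ := by
            rw [hmul2, _root_.map_mul, ht₂ σ hσ]
          rw [← hx, ← hy, ← heq1] at this
          have hσ1 : σ = 1 := by
            have := this.symm
            rw [mul_eq_left] at this
            exact this
          rwa [← hσ1]
      refine ⟨?_, ⟨(1, u), show φ₁ (1 : A₁) = φ₂ u by
          simp [MonoidHom.mem_ker.mp (hS02sub hu')]⟩, Or.inr (Or.inl ⟨rfl, hu'⟩), ?_⟩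
      · intro hh
        exact hne2 (by rw [hh])
      · apply Subtype.ext
        apply Prod.ext
        · simp [heq1]
        · simpa using hmul2
    · -- horizontal edge in the kernel: generator (u, 1) with u ∈ S01
      have hu' : u ∈ S01 := by
        rcases hu with hu | ⟨σ, hσ, rfl⟩
        · exact hu
        · exfalso
          apply hS₁one
          have : φ₁ (y : A₁ × A₂).1 = φ₁ (x : A₁ × A₂).1 * σ := by
            rw [hmul1, _root_.map_mul, ht₁ σ hσ]
          rw [← hker] at this
          have hσ1 : σ = 1 := by
            have := this.symm
            rw [mul_eq_left] at this
            exact this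
          rwa [← hσ1]
      refine ⟨?_, ⟨(u, 1), show φ₁ u = φ₂ (1 : A₂) by
          simp [MonoidHom.mem_ker.mp (hS01sub hu')]⟩, Or.inl ⟨hu', rfl⟩, ?_⟩
      · intro hh
        exact hne1 (by rw [hh])
      · apply Subtype.ext
        apply Prod.ext
        · simpa using hmul1
        · simp [heq2]
    · -- diagonal edge: generator (t₁ σ, t₂ σ)
      have hu' : ∃ σ ∈ S₁, u = t₁ σ ∧ φ₁ (y : A₁ × A₂).1 = φ₁ (x : A₁ × A₂).1 * σ := by
        rcases hu with hu | ⟨σ, hσ, rfl⟩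
        · exact absurd (by rw [hmul1, _root_.map_mul, MonoidHom.mem_ker.mp (hS01sub hu), mul_one]) hφne
        · exact ⟨σ, hσ, rfl, by rw [hmul1, _root_.map_mul, ht₁ σ hσ]⟩
      have hw' : ∃ τ ∈ S₁, w = t₂ τ ∧ φ₂ (y : A₁ × A₂).2 = φ₂ (x : A₁ × A₂).2 * τ := by
        rcases hw with hw | ⟨τ, hτ, rfl⟩
        · exfalso
          apply hφne
          rw [hx, hy, hmul2, _root_.map_mul, MonoidHom.mem_ker.mp (hS02sub hw), mul_one]
        · exact ⟨τ, hτ, rfl, by rw [hmul2, _root_.map_mul, ht₂ τ hτ]⟩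
      obtain ⟨σ, hσ, rfl, hφ1⟩ := hu'
      obtain ⟨τ, hτ, rfl, hφ2⟩ := hw'
      have hστ : σ = τ := by
        rw [hx, hy] at hφ1
        rw [hφ1] at hφ2
        exact mul_left_cancel hφ2
      subst hστ
      refine ⟨?_, ⟨(t₁ σ, t₂ σ), show φ₁ (t₁ σ) = φ₂ (t₂ σ) by
          rw [ht₁ σ hσ, ht₂ σ hσ]⟩, Or.inr (Or.inr ⟨σ, hσ, rfl⟩), ?_⟩
      · intro hh
        exact hne1 (by rw [hh])
      · apply Subtype.ext
        apply Prod.ext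
        · simpa using hmul1
        · simpa using hmul2
end
end
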